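/- There exists a function φ : ℝ_{>0} → ℝ_{>0} such that for every c > 0, every n ∈ ℕ with n ≥ 2, every integer i with 1 ≤ i ≤ n − ⌊log^{2.5} n⌋, all integers x, β, β', α, α', every ε ∈ [-1,1] and every set S ⊆ ℤ satisfying: |α|, |α'| ≤ √(c·s_i·log n); |β|, |β'| ≤ 1; S ⊆ [−√(c·ℓ_i·log n), √(c·ℓ_i·log n)]; x ∈ S; |ε| ≤ √(c·log n / s_i); Pr_{x'←B(ℓ_i,ε)}[x' ∈ S] > 0; and E_{x'←B(ℓ_i,ε)}[|x'| given x' ∈ S] ≤ E_{x'←B(ℓ_i,ε)}[|x'|]; it holds that |E_{x'←B(ℓ_i,ε)}[exp((α·x + β·x² + α'·x' + β'·x'²)/s_{i+1}) given x' ∈ S] − 1| ≤ φ(c)·√(log n / ℓ_i)·(1 + |x|/√ℓ_i). -/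

import Mathlib

noncomputable def binPMF (n : ℕ) (ε : ℝ) (k : ℤ) : ℝ :=
  if ((n : ℤ) + k) % 2 = 0 ∧ -(n : ℤ) ≤ k ∧ k ≤ (n : ℤ) then
    (n.choose (((n : ℤ) + k) / 2).toNat : ℝ) *
      ((1 + ε) / 2) ^ (((n : ℤ) + k) / 2).toNat *
      ((1 - ε) / 2) ^ (((n : ℤ) - k) / 2).toNat
  else 0

noncomputable def binTail (n : ℕ) (ε : ℝ) (k : ℤ) : ℝ :=
  ∑ t ∈ Finset.Icc k (n : ℤ), binPMF n ε t

def lRound (m i : ℕ) : ℕ := m + 1 - i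

def sRound (m i : ℕ) : ℕ := ∑ j ∈ Finset.Icc i m, lRound m j

lemma my_abs_exp_sub_one (t : ℝ) : |Real.exp t - 1| ≤ |t| * Real.exp |t| := by
  rcases le_or_gt 0 t with h | h
  · rw [abs_of_nonneg h, abs_of_nonneg (by simpa using Real.one_le_exp h)]
    have h1 : 1 - t ≤ Real.exp (-t) := by
      have := Real.add_one_le_exp (-t); linarith
    have h2 : Real.exp (-t) * Real.exp t = 1 := by
      rw [← Real.exp_add]; simp
    nlinarith [mul_le_mul_of_nonneg_right h1 (Real.exp_pos t).le, h2]
  · rw [abs_of_neg h, abs_of_nonpos (by simpa using Real.exp_le_one_iff.mpr h.le)]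
    have h1 : t + 1 ≤ Real.exp t := Real.add_one_le_exp t
    nlinarith [Real.one_le_exp (neg_nonneg.mpr h.le)]

lemma sRound_mul_two (m i : ℕ) : 2 * sRound m i = lRound m i * (lRound m i + 1) := by
  rcases le_or_gt i (m+1) with h | h
  · have : sRound m i = ∑ k ∈ Finset.Icc 1 (lRound m i), k := by
      unfold sRound
      refine Finset.sum_nbij' (fun j => m + 1 - j) (fun k => m + 1 - k) ?_ ?_ ?_ ?_ ?_
      · intro a ha
        simp only [Finset.mem_Icc] at ha ⊢
        unfold lRound
        omega
      · intro a ha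
        simp only [Finset.mem_Icc] at ha ⊢
        unfold lRound at ha
        omega
      · intro a ha; simp only [Finset.mem_Icc] at ha; omega
      · intro a ha; simp only [Finset.mem_Icc] at ha; unfold lRound at ha; omega
      · intro a ha; rfl
    rw [this]
    have h2 : ∀ K : ℕ, 2 * (∑ k ∈ Finset.Icc 1 K, k) = K * (K + 1) := by
      intro K
      induction K with
      | zero => simp
      | succ n ih =>
        rw [Finset.sum_Icc_succ_top (by omega), mul_add, ih]; ring
    exact h2 _
  · have h1 : lRound m i = 0 := by unfold lRound; omega
    have h2 : sRound m i = 0 := by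
      unfold sRound
      rw [Finset.Icc_eq_empty (by omega), Finset.sum_empty]
    rw [h1, h2]

lemma binPMF_nonneg (n : ℕ) (ε : ℝ) (hε : ε ∈ Set.Icc (-1:ℝ) 1) (k : ℤ) :
    0 ≤ binPMF n ε k := by
  unfold binPMF
  obtain ⟨h1, h2⟩ := hε
  split
  · have hp : (0:ℝ) ≤ (1 + ε) / 2 := by linarith
    have hq : (0:ℝ) ≤ (1 - ε) / 2 := by linarith
    exact mul_nonneg (mul_nonneg (by positivity) (pow_nonneg hp _)) (pow_nonneg hq _)
  · exact le_refl 0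

lemma binPMF_transfer (L : ℕ) (ε : ℝ) (g : ℤ → ℝ) :
    ∑ k ∈ Finset.Icc (-(L:ℤ)) (L:ℤ), binPMF L ε k * g k =
    ∑ j ∈ Finset.range (L+1),
      (L.choose j : ℝ) * ((1+ε)/2)^j * ((1-ε)/2)^(L-j) * g (2*(j:ℤ) - L) := by
  classical
  rw [← Finset.sum_filter_of_ne
    (p := fun k => ((L:ℤ)+k) % 2 = 0 ∧ -(L:ℤ) ≤ k ∧ k ≤ (L:ℤ))
    (by
      intro k hk hne
      by_contra hc
      unfold binPMF at hne
      rw [if_neg hc] at hne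
      simp at hne)]
  refine Finset.sum_nbij' (fun k => (((L:ℤ)+k)/2).toNat) (fun j => 2*(j:ℤ) - (L:ℤ))
    ?_ ?_ ?_ ?_ ?_
  · intro a ha
    simp only [Finset.mem_filter, Finset.mem_Icc] at ha
    simp only [Finset.mem_range]
    omega
  · intro a ha
    simp only [Finset.mem_range] at ha
    simp only [Finset.mem_filter, Finset.mem_Icc]
    omega
  · intro a ha
    simp only [Finset.mem_filter, Finset.mem_Icc] at ha
    omega
  · intro a ha
    simp only [Finset.mem_range] at ha
    omega
  · intro a ha
    simp only [Finset.mem_filter, Finset.mem_Icc] at ha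
    unfold binPMF
    rw [if_pos ha.2]
    have e1 : L - (((L:ℤ)+a)/2).toNat = (((L:ℤ)-a)/2).toNat := by omega
    have e2 : 2*(((((L:ℤ)+a)/2).toNat : ℤ)) - (L:ℤ) = a := by omega
    rw [e1, e2]

lemma binom_T0 (L : ℕ) (p q : ℝ) :
    ∑ j ∈ Finset.range (L+1), (L.choose j : ℝ) * p^j * q^(L-j) = (p+q)^L := by
  rw [add_pow]
  exact Finset.sum_congr rfl (fun j _ => by ring)

lemma binom_T1 (L : ℕ) (hL : 1 ≤ L) (p q : ℝ) :
    ∑ j ∈ Finset.range (L+1), (j:ℝ) * ((L.choose j : ℝ) * p^j * q^(L-j)) =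
      (L:ℝ) * p * (p+q)^(L-1) := by
  obtain ⟨m, rfl⟩ : ∃ m, L = m + 1 := ⟨L-1, by omega⟩
  simp only [Nat.add_sub_cancel]
  rw [Finset.sum_range_succ']
  simp only [Nat.cast_zero, zero_mul, add_zero]
  have key : ∀ k ∈ Finset.range (m+1),
      ((k+1:ℕ):ℝ) * (((m+1).choose (k+1) : ℝ) * p^(k+1) * q^(m+1-(k+1))) =
      ((m+1:ℕ):ℝ) * p * ((m.choose k : ℝ) * p^k * q^(m-k)) := by
    intro k hk
    have hn : (m+1) * m.choose k = (m+1).choose (k+1) * (k+1) := Nat.add_one_mul_choose_eq m k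
    have hc : ((m+1:ℕ):ℝ) * (m.choose k : ℝ) = ((m+1).choose (k+1) : ℝ) * ((k+1:ℕ):ℝ) := by
      exact_mod_cast hn
    have he : m + 1 - (k+1) = m - k := by omega
    rw [he]
    push_cast at hc ⊢
    linear_combination (-(p^k * p * q^(m-k))) * hc
  rw [Finset.sum_congr rfl key, ← Finset.mul_sum, binom_T0]

lemma binom_T2 (L : ℕ) (hL : 2 ≤ L) (p q : ℝ) :
    ∑ j ∈ Finset.range (L+1), (j:ℝ) * ((j:ℝ)-1) * ((L.choose j : ℝ) * p^j * q^(L-j)) =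
      (L:ℝ) * ((L:ℝ)-1) * p^2 * (p+q)^(L-2) := by
  obtain ⟨m, rfl⟩ : ∃ m, L = m + 2 := ⟨L-2, by omega⟩
  simp only [Nat.add_sub_cancel]
  rw [Finset.sum_range_succ']
  rw [Finset.sum_range_succ']
  simp only [Nat.cast_zero, Nat.cast_one, zero_mul, mul_zero, add_zero, Nat.cast_ofNat]
  have key : ∀ k ∈ Finset.range (m+1),
      ((k+1+1:ℕ):ℝ) * (((k+1+1:ℕ):ℝ)-1) * (((m+2).choose (k+1+1) : ℝ) * p^(k+1+1) * q^(m+2-(k+1+1))) =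
      ((m+2:ℕ):ℝ) * ((m+1:ℕ):ℝ) * p^2 * ((m.choose k : ℝ) * p^k * q^(m-k)) := by
    intro k hk
    have hn1 : (m+2) * (m+1).choose (k+1) = (m+2).choose (k+2) * (k+2) :=
      Nat.add_one_mul_choose_eq (m+1) (k+1)
    have hn2 : (m+1) * m.choose k = (m+1).choose (k+1) * (k+1) := Nat.add_one_mul_choose_eq m k
    have hn : (m+2) * (m+1) * m.choose k = (m+2).choose (k+2) * ((k+2) * (k+1)) := by
      calc (m+2) * (m+1) * m.choose k = (m+2) * ((m+1) * m.choose k) := by ring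
      _ = (m+2) * ((m+1).choose (k+1) * (k+1)) := by rw [hn2]
      _ = ((m+2) * (m+1).choose (k+1)) * (k+1) := by ring
      _ = ((m+2).choose (k+2) * (k+2)) * (k+1) := by rw [hn1]
      _ = (m+2).choose (k+2) * ((k+2) * (k+1)) := by ring
    have hc : ((m+2:ℕ):ℝ) * ((m+1:ℕ):ℝ) * (m.choose k : ℝ) =
        ((m+2).choose (k+2) : ℝ) * (((k+2:ℕ):ℝ) * ((k+1:ℕ):ℝ)) := by exact_mod_cast hn
    have he : m + 2 - (k+1+1) = m - k := by omega
    rw [he]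
    push_cast at hc ⊢
    linear_combination (-(p^k * p^2 * q^(m-k))) * hc
  rw [Finset.sum_congr rfl key, ← Finset.mul_sum, binom_T0]
  push_cast
  ring

lemma binom_sq (L : ℕ) (hL : 2 ≤ L) (ε : ℝ) :
    ∑ j ∈ Finset.range (L+1), (L.choose j : ℝ) * ((1+ε)/2)^j * ((1-ε)/2)^(L-j) *
      (((2*(j:ℤ) - (L:ℤ) : ℤ)):ℝ)^2 =
      (L:ℝ) + (L:ℝ)*((L:ℝ)-1)*ε^2 := by
  have expand : ∀ j ∈ Finset.range (L+1),
      (L.choose j : ℝ) * ((1+ε)/2)^j * ((1-ε)/2)^(L-j) * (((2*(j:ℤ) - (L:ℤ) : ℤ)):ℝ)^2 =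
      4 * ((j:ℝ) * ((j:ℝ)-1) * ((L.choose j : ℝ) * ((1+ε)/2)^j * ((1-ε)/2)^(L-j))) +
      (4 - 4*(L:ℝ)) * ((j:ℝ) * ((L.choose j : ℝ) * ((1+ε)/2)^j * ((1-ε)/2)^(L-j))) +
      (L:ℝ)^2 * ((L.choose j : ℝ) * ((1+ε)/2)^j * ((1-ε)/2)^(L-j)) := by
    intro j hj
    push_cast
    ring
  rw [Finset.sum_congr rfl expand]
  rw [Finset.sum_add_distrib, Finset.sum_add_distrib, ← Finset.mul_sum, ← Finset.mul_sum,
    ← Finset.mul_sum]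
  rw [binom_T2 L hL, binom_T1 L (by omega), binom_T0]
  have hpq : (1+ε)/2 + (1-ε)/2 = 1 := by ring
  rw [hpq, one_pow, one_pow, one_pow]
  ring

lemma binom_sum_one (L : ℕ) (ε : ℝ) :
    ∑ k ∈ Finset.Icc (-(L:ℤ)) (L:ℤ), binPMF L ε k = 1 := by
  have := binPMF_transfer L ε (fun _ => 1)
  simp only [mul_one] at this
  rw [this, binom_T0]
  have h1 : (1+ε)/2 + (1-ε)/2 = 1 := by ring
  rw [h1, one_pow]

lemma sqrt_le_of_le_sq {a t : ℝ} (ht : 0 ≤ t) (h : a ≤ t^2) : Real.sqrt a ≤ t := by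
  calc Real.sqrt a ≤ Real.sqrt (t^2) := Real.sqrt_le_sqrt h
  _ = t := Real.sqrt_sq ht

set_option maxHeartbeats 3000000 in
theorem stmt_11 :
    ∃ φ : ℝ → ℝ, (∀ c : ℝ, 0 < c → 0 < φ c) ∧
      ∀ c : ℝ, 0 < c → ∀ n : ℕ, 2 ≤ n → ∀ i : ℕ, 1 ≤ i →
        (i : ℝ) ≤ (n : ℝ) - (⌊Real.logb 2 n ^ ((5 : ℝ) / 2)⌋₊ : ℝ) →
        ∀ x α α' β β' : ℤ, ∀ ε : ℝ, ε ∈ Set.Icc (-1 : ℝ) 1 → ∀ S : Set ℤ,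
          |(α : ℝ)| ≤ Real.sqrt (c * (sRound n i : ℝ) * Real.logb 2 n) →
          |(α' : ℝ)| ≤ Real.sqrt (c * (sRound n i : ℝ) * Real.logb 2 n) →
          |β| ≤ 1 → |β'| ≤ 1 →
          (∀ z ∈ S, |(z : ℝ)| ≤ Real.sqrt (c * (lRound n i : ℝ) * Real.logb 2 n)) →
          x ∈ S →
          |ε| ≤ Real.sqrt (c * Real.logb 2 n / (sRound n i : ℝ)) →
          0 < (∑ z ∈ Finset.Icc (-(lRound n i : ℤ)) (lRound n i : ℤ),
              S.indicator (fun z' => binPMF (lRound n i) ε z') z) →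
          (∑ z ∈ Finset.Icc (-(lRound n i : ℤ)) (lRound n i : ℤ),
              S.indicator (fun z' => binPMF (lRound n i) ε z' * |(z' : ℝ)|) z) /
            (∑ z ∈ Finset.Icc (-(lRound n i : ℤ)) (lRound n i : ℤ),
              S.indicator (fun z' => binPMF (lRound n i) ε z') z) ≤
            (∑ z ∈ Finset.Icc (-(lRound n i : ℤ)) (lRound n i : ℤ),
              binPMF (lRound n i) ε z * |(z : ℝ)|) →
          |(∑ z ∈ Finset.Icc (-(lRound n i : ℤ)) (lRound n i : ℤ),
              S.indicator (fun z' => binPMF (lRound n i) ε z' *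
                Real.exp (((α : ℝ) * (x : ℝ) + (β : ℝ) * (x : ℝ) ^ 2 +
                  (α' : ℝ) * (z' : ℝ) + (β' : ℝ) * (z' : ℝ) ^ 2) / (sRound n (i + 1) : ℝ))) z) /
            (∑ z ∈ Finset.Icc (-(lRound n i : ℤ)) (lRound n i : ℤ),
              S.indicator (fun z' => binPMF (lRound n i) ε z') z) - 1| ≤
            φ c * Real.sqrt (Real.logb 2 n / (lRound n i : ℝ)) *
              (1 + |(x : ℝ)| / Real.sqrt (lRound n i)) := by
  refine ⟨fun c => Real.exp (16*c) * (8*Real.sqrt c + 8*Real.sqrt (c*(1+2*c))), ?_, ?_⟩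
  · intro c hc
    have h1 : 0 < Real.sqrt c := Real.sqrt_pos.mpr hc
    have h2 : 0 ≤ Real.sqrt (c*(1+2*c)) := Real.sqrt_nonneg _
    exact mul_pos (Real.exp_pos _) (by linarith)
  intro c hc n hn i hi1 hi2 x α α' β β' ε hε S hα hα' hβ hβ' hS hxS hεb hW hEcond
  set ln := Real.logb 2 n with hlndef
  set L := lRound n i with hLdef
  set s := sRound n i with hsdef
  set s' := sRound n (i + 1) with hs'def
  -- basic log facts (needed for hin)
  have hln1 : (1:ℝ) ≤ ln := by
    rw [hlndef, show (1:ℝ) = Real.logb 2 2 by simp]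
    exact Real.logb_le_logb_of_le (by norm_num) (by norm_num) (by exact_mod_cast hn)
  have hln0 : (0:ℝ) ≤ ln := by linarith
  have hfl1 : (1:ℝ) ≤ (⌊ln ^ ((5:ℝ)/2)⌋₊ : ℝ) := by
    have h1 : (1:ℝ) ≤ ln ^ ((5:ℝ)/2) := by
      have := Real.rpow_le_rpow_of_exponent_le hln1 (show (0:ℝ) ≤ 5/2 by norm_num)
      rwa [Real.rpow_zero] at this
    exact_mod_cast Nat.le_floor (by exact_mod_cast h1)
  have hin : i + 1 ≤ n := by
    have : (i:ℝ) + 1 ≤ (n:ℝ) := by linarith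
    exact_mod_cast this
  -- nat facts first
  have hsnat : 2 * s = L * (L + 1) := by rw [hsdef, hLdef]; exact sRound_mul_two n i
  have hl1 : lRound n (i+1) = L - 1 := by rw [hLdef]; unfold lRound; omega
  have hs'nat : 2 * s' = (L - 1) * L := by
    rw [hs'def, sRound_mul_two n (i+1), hl1]
    have h9 : L - 1 + 1 = L := by
      rw [hLdef]; unfold lRound; omega
    rw [h9]
  have hLnat : L = n + 1 - i := by rw [hLdef]; rfl
  clear_value ln L s s'
  have hL2 : 2 ≤ L := by omega
  have hLcast : (L:ℝ) = (n:ℝ) + 1 - (i:ℝ) := by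
    have h9 : i ≤ n + 1 := by omega
    rw [hLnat]
    push_cast [h9]; ring
  have hLge : ln ^ ((5:ℝ)/2) ≤ (L:ℝ) := by
    have h1 := Nat.lt_floor_add_one (ln ^ ((5:ℝ)/2))
    rw [hLcast]; linarith
  have hln2L : ln^2 ≤ (L:ℝ) := by
    have h1 : ln^(((2:ℕ)):ℝ) ≤ ln^((5:ℝ)/2) :=
      Real.rpow_le_rpow_of_exponent_le hln1 (by norm_num)
    have h2 : ln^(((2:ℕ)):ℝ) = ln^(2:ℕ) := Real.rpow_natCast ln 2
    calc ln^2 = ln^(((2:ℕ)):ℝ) := h2.symm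
      _ ≤ ln^((5:ℝ)/2) := h1
      _ ≤ (L:ℝ) := hLge
  have hL0 : (0:ℝ) < L := by positivity
  have hlnL : ln ≤ (L:ℝ) := by
    nlinarith only [hln2L, mul_nonneg hln0 (by linarith : (0:ℝ) ≤ ln - 1)]
  have hsL0 : (0:ℝ) < Real.sqrt L := Real.sqrt_pos.mpr hL0
  have hlnsL : ln ≤ Real.sqrt L := by
    rw [show Real.sqrt (L:ℝ) = Real.sqrt ((L:ℝ)) from rfl]
    exact (Real.le_sqrt hln0 hL0.le).mpr hln2L
  -- sRound facts
  have hs'pos_nat : 0 < s' := by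
    have h9 : 1*2 ≤ (L-1)*L := Nat.mul_le_mul (by omega) (by omega)
    omega
  have hs'pos : (0:ℝ) < (s':ℝ) := by exact_mod_cast hs'pos_nat
  have hsR : 2*(s:ℝ) = (L:ℝ) * ((L:ℝ)+1) := by exact_mod_cast hsnat
  have hL2R : (2:ℝ) ≤ (L:ℝ) := by exact_mod_cast hL2
  have hspos : (0:ℝ) < (s:ℝ) := by nlinarith only [hsR, hL0, sq_nonneg ((L:ℝ))]
  have hsle : (s:ℝ) ≤ (L:ℝ)^2 := by
    nlinarith only [hsR, hL0, mul_nonneg (by linarith : (0:ℝ) ≤ (L:ℝ)-1) hL0.le]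
  have hsge : (L:ℝ)^2 ≤ 2*(s:ℝ) := by nlinarith only [hsR, hL0]
  have hLle2 : (L:ℝ) ≤ (L:ℝ)^2 := by
    nlinarith only [hL0, hL2R, mul_nonneg (by linarith : (0:ℝ) ≤ (L:ℝ)-1) hL0.le]
  have hs'R : 2*(s':ℝ) = ((L:ℝ)-1)*(L:ℝ) := by
    have h8 : 1 ≤ L := by omega
    have h9 := congrArg (Nat.cast : ℕ → ℝ) hs'nat
    push_cast [Nat.cast_sub h8] at h9
    linarith [h9]
  have hs'4 : (L:ℝ)^2 ≤ 4*(s':ℝ) := by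
    nlinarith only [hs'R, hL2R, mul_nonneg (by linarith : (0:ℝ) ≤ (L:ℝ)-2) hL0.le]
  -- sqrt abbreviations
  set sc := Real.sqrt c with hscdef
  set sl := Real.sqrt ln with hsldef
  set sL := Real.sqrt (L:ℝ) with hsLdef
  set s2c := Real.sqrt (1+2*c) with hs2cdef
  set r := Real.sqrt (ln / (L:ℝ)) with hrdef
  have hsc0 : 0 ≤ sc := Real.sqrt_nonneg _
  have hsl0 : 0 ≤ sl := Real.sqrt_nonneg _
  have hs2c0 : 0 ≤ s2c := Real.sqrt_nonneg _
  have hr0 : 0 ≤ r := Real.sqrt_nonneg _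
  have hscsq : sc * sc = c := Real.mul_self_sqrt hc.le
  have hslsq : sl * sl = ln := Real.mul_self_sqrt hln0
  have hsLsq : sL * sL = (L:ℝ) := Real.mul_self_sqrt hL0.le
  have hs2csq : s2c * s2c = 1+2*c := Real.mul_self_sqrt (by linarith)
  have hrsL : r * sL = sl := by
    rw [hrdef, hsLdef, hsldef, ← Real.sqrt_mul (by positivity)]
    congr 1
    field_simp
  have hsqrtcLln : Real.sqrt (c * (L:ℝ) * ln) = sc * sL * sl := by
    rw [Real.sqrt_mul (by positivity), Real.sqrt_mul hc.le, hscdef, hsLdef, hsldef]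
  -- D and B
  set Dv := Real.sqrt (c * (s:ℝ) * ln) + Real.sqrt (c * (L:ℝ) * ln) with hDvdef
  set Bv := Dv / (s':ℝ) with hBvdef
  set Av := Bv * |(x:ℝ)| with hAvdef
  have hDv0 : 0 ≤ Dv := by positivity
  have hBv0 : 0 ≤ Bv := by positivity
  have hAv0 : 0 ≤ Av := by positivity
  have hDvle : Dv ≤ 2 * sc * sl * (L:ℝ) := by
    have hq : (sc*sl*(L:ℝ))^2 = c*ln*(L:ℝ)^2 := by
      linear_combination (sl*sl*(L:ℝ)^2)*hscsq + (c*(L:ℝ)^2)*hslsq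
    have h1 : Real.sqrt (c * (s:ℝ) * ln) ≤ sc * sl * (L:ℝ) := by
      apply sqrt_le_of_le_sq (by positivity)
      rw [hq]
      linarith only [mul_le_mul_of_nonneg_left hsle (mul_nonneg hc.le hln0)]
    have h2 : Real.sqrt (c * (L:ℝ) * ln) ≤ sc * sl * (L:ℝ) := by
      apply sqrt_le_of_le_sq (by positivity)
      rw [hq]
      linarith only [mul_le_mul_of_nonneg_left hLle2 (mul_nonneg hc.le hln0)]
    rw [hDvdef]
    linarith only [h1, h2]
  have hBvle : Bv ≤ 8 * sc * sl / (L:ℝ) := by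
    rw [hBvdef, div_le_div_iff₀ hs'pos hL0]
    nlinarith only [mul_le_mul_of_nonneg_right hDvle hL0.le,
      mul_le_mul_of_nonneg_left hs'4 (mul_nonneg hsc0 hsl0)]
  -- bound on x
  have hxb : |(x:ℝ)| ≤ Real.sqrt (c * (L:ℝ) * ln) := hS x hxS
  -- M bound pieces
  have hBvM : Bv * Real.sqrt (c * (L:ℝ) * ln) ≤ 8 * c := by
    rw [hsqrtcLln]
    have h1 : Bv * (sc * sL * sl) ≤ (8 * sc * sl / (L:ℝ)) * (sc * sL * sl) :=
      mul_le_mul_of_nonneg_right hBvle (by positivity)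
    have h2 : (8 * sc * sl / (L:ℝ)) * (sc * sL * sl) = 8 * c * (ln / sL) := by
      rw [← hscsq, ← hslsq, ← hsLsq]
      field_simp
    have h3 : ln / sL ≤ 1 := by
      rw [div_le_one hsL0]; exact hlnsL
    calc Bv * (sc * sL * sl) ≤ 8 * c * (ln / sL) := by rw [← h2]; exact h1
      _ ≤ 8 * c * 1 := by
          apply mul_le_mul_of_nonneg_left h3 (by positivity)
      _ = 8 * c := by ring
  -- pointwise M bound
  have hMz : ∀ z : ℤ, z ∈ S → Av + Bv * |(z:ℝ)| ≤ 16*c := by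
    intro z hz
    have h1 : Bv * |(x:ℝ)| ≤ Bv * Real.sqrt (c*(L:ℝ)*ln) := mul_le_mul_of_nonneg_left hxb hBv0
    have h2 : Bv * |(z:ℝ)| ≤ Bv * Real.sqrt (c*(L:ℝ)*ln) :=
      mul_le_mul_of_nonneg_left (hS z hz) hBv0
    rw [hAvdef]
    linarith only [h1, h2, hBvM]
  -- |u z| bound
  have hb : |(β:ℝ)| ≤ 1 := by exact_mod_cast hβ
  have hb' : |(β':ℝ)| ≤ 1 := by exact_mod_cast hβ'
  have hu : ∀ z : ℤ, z ∈ S →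
      |((α:ℝ)*(x:ℝ) + (β:ℝ)*(x:ℝ)^2 + (α':ℝ)*(z:ℝ) + (β':ℝ)*(z:ℝ)^2)/(s':ℝ)|
        ≤ Av + Bv * |(z:ℝ)| := by
    intro z hz
    have hzb : |(z:ℝ)| ≤ Real.sqrt (c*(L:ℝ)*ln) := hS z hz
    have t1 : |(α:ℝ)*(x:ℝ)| ≤ Real.sqrt (c*(s:ℝ)*ln) * |(x:ℝ)| := by
      rw [abs_mul]; exact mul_le_mul_of_nonneg_right hα (abs_nonneg _)
    have t2 : |(β:ℝ)*(x:ℝ)^2| ≤ Real.sqrt (c*(L:ℝ)*ln) * |(x:ℝ)| := by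
      have hx2 : |(x:ℝ)^2| = |(x:ℝ)| * |(x:ℝ)| := by
        rw [abs_of_nonneg (sq_nonneg _), sq, ← abs_mul_abs_self]
      rw [abs_mul, hx2]
      calc |(β:ℝ)| * (|(x:ℝ)| * |(x:ℝ)|) ≤ 1 * (|(x:ℝ)| * |(x:ℝ)|) :=
            mul_le_mul_of_nonneg_right hb (by positivity)
        _ = |(x:ℝ)| * |(x:ℝ)| := one_mul _
        _ ≤ Real.sqrt (c*(L:ℝ)*ln) * |(x:ℝ)| :=
            mul_le_mul_of_nonneg_right hxb (abs_nonneg _)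
    have t3 : |(α':ℝ)*(z:ℝ)| ≤ Real.sqrt (c*(s:ℝ)*ln) * |(z:ℝ)| := by
      rw [abs_mul]; exact mul_le_mul_of_nonneg_right hα' (abs_nonneg _)
    have t4 : |(β':ℝ)*(z:ℝ)^2| ≤ Real.sqrt (c*(L:ℝ)*ln) * |(z:ℝ)| := by
      have hz2 : |(z:ℝ)^2| = |(z:ℝ)| * |(z:ℝ)| := by
        rw [abs_of_nonneg (sq_nonneg _), sq, ← abs_mul_abs_self]
      rw [abs_mul, hz2]
      calc |(β':ℝ)| * (|(z:ℝ)| * |(z:ℝ)|) ≤ 1 * (|(z:ℝ)| * |(z:ℝ)|) :=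
            mul_le_mul_of_nonneg_right hb' (by positivity)
        _ = |(z:ℝ)| * |(z:ℝ)| := one_mul _
        _ ≤ Real.sqrt (c*(L:ℝ)*ln) * |(z:ℝ)| :=
            mul_le_mul_of_nonneg_right hzb (abs_nonneg _)
    have h5 := abs_add_le ((α:ℝ)*(x:ℝ) + (β:ℝ)*(x:ℝ)^2 + (α':ℝ)*(z:ℝ)) ((β':ℝ)*(z:ℝ)^2)
    have h6 := abs_add_le ((α:ℝ)*(x:ℝ) + (β:ℝ)*(x:ℝ)^2) ((α':ℝ)*(z:ℝ))
    have h7 := abs_add_le ((α:ℝ)*(x:ℝ)) ((β:ℝ)*(x:ℝ)^2)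
    have hnum : |(α:ℝ)*(x:ℝ) + (β:ℝ)*(x:ℝ)^2 + (α':ℝ)*(z:ℝ) + (β':ℝ)*(z:ℝ)^2|
        ≤ Dv * (|(x:ℝ)| + |(z:ℝ)|) := by
      rw [hDvdef]
      nlinarith only [t1, t2, t3, t4, h5, h6, h7]
    rw [abs_div, abs_of_pos hs'pos, hAvdef, hBvdef]
    have hshape : Dv/(s':ℝ)*|(x:ℝ)| + Dv/(s':ℝ)*|(z:ℝ)| = (Dv*(|(x:ℝ)|+|(z:ℝ)|))/(s':ℝ) := by
      ring
    rw [hshape]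
    exact (div_le_div_iff_of_pos_right hs'pos).mpr hnum
  -- exp bound
  have habs : ∀ z : ℤ, z ∈ S →
      |Real.exp (((α:ℝ)*(x:ℝ) + (β:ℝ)*(x:ℝ)^2 + (α':ℝ)*(z:ℝ) + (β':ℝ)*(z:ℝ)^2)/(s':ℝ)) - 1|
        ≤ Real.exp (16*c) * (Av + Bv * |(z:ℝ)|) := by
    intro z hz
    have h1 := my_abs_exp_sub_one
      (((α:ℝ)*(x:ℝ) + (β:ℝ)*(x:ℝ)^2 + (α':ℝ)*(z:ℝ) + (β':ℝ)*(z:ℝ)^2)/(s':ℝ))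
    have h2 := hu z hz
    have h3 := hMz z hz
    have h4 : Real.exp |((α:ℝ)*(x:ℝ) + (β:ℝ)*(x:ℝ)^2 + (α':ℝ)*(z:ℝ) + (β':ℝ)*(z:ℝ)^2)/(s':ℝ)|
        ≤ Real.exp (16*c) := Real.exp_le_exp.mpr (le_trans h2 h3)
    have h0 : 0 ≤ Av + Bv * |(z:ℝ)| := add_nonneg hAv0 (mul_nonneg hBv0 (abs_nonneg _))
    calc |Real.exp (((α:ℝ)*(x:ℝ) + (β:ℝ)*(x:ℝ)^2 + (α':ℝ)*(z:ℝ) + (β':ℝ)*(z:ℝ)^2)/(s':ℝ)) - 1|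
        ≤ |((α:ℝ)*(x:ℝ) + (β:ℝ)*(x:ℝ)^2 + (α':ℝ)*(z:ℝ) + (β':ℝ)*(z:ℝ)^2)/(s':ℝ)| *
          Real.exp |((α:ℝ)*(x:ℝ) + (β:ℝ)*(x:ℝ)^2 + (α':ℝ)*(z:ℝ) + (β':ℝ)*(z:ℝ)^2)/(s':ℝ)| := h1
      _ ≤ (Av + Bv * |(z:ℝ)|) * Real.exp (16*c) :=
          mul_le_mul h2 h4 (Real.exp_pos _).le h0
      _ = Real.exp (16*c) * (Av + Bv * |(z:ℝ)|) := mul_comm _ _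
  -- pmf facts
  have hP : ∀ k : ℤ, 0 ≤ binPMF L ε k := binPMF_nonneg L ε hε
  have hsum1 : ∑ z ∈ Finset.Icc (-(L:ℤ)) (L:ℤ), binPMF L ε z = 1 := binom_sum_one L ε
  have hEsq : ∑ z ∈ Finset.Icc (-(L:ℤ)) (L:ℤ), binPMF L ε z * ((z:ℝ))^2
      = (L:ℝ) + (L:ℝ)*((L:ℝ)-1)*ε^2 := by
    have h1 := binPMF_transfer L ε (fun z => ((z:ℝ))^2)
    rw [h1]
    exact binom_sq L hL2 ε
  have hε2 : ε^2 * (s:ℝ) ≤ c * ln := by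
    have h1 : |ε|^2 ≤ Real.sqrt (c*ln/(s:ℝ))^2 := by
      apply pow_le_pow_left₀ (abs_nonneg ε) hεb
    rw [sq_abs, Real.sq_sqrt (div_nonneg (mul_nonneg hc.le hln0) hspos.le)] at h1
    exact (le_div_iff₀ hspos).mp h1
  have hEsqle : ∑ z ∈ Finset.Icc (-(L:ℤ)) (L:ℤ), binPMF L ε z * ((z:ℝ))^2
      ≤ (1+2*c)*(L:ℝ) := by
    rw [hEsq]
    nlinarith only [mul_le_mul_of_nonneg_right hsge (sq_nonneg ε), hε2,
      mul_le_mul_of_nonneg_left hlnL hc.le, mul_nonneg hL0.le (sq_nonneg ε)]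
  -- set sums
  set W := ∑ z ∈ Finset.Icc (-(L:ℤ)) (L:ℤ), S.indicator (fun z' => binPMF L ε z') z with hWdef
  set Ebar := ∑ z ∈ Finset.Icc (-(L:ℤ)) (L:ℤ),
      S.indicator (fun z' => binPMF L ε z' * |(z':ℝ)|) z with hEbardef
  set Efull := ∑ z ∈ Finset.Icc (-(L:ℤ)) (L:ℤ), binPMF L ε z * |(z:ℝ)| with hEfulldef
  set N := ∑ z ∈ Finset.Icc (-(L:ℤ)) (L:ℤ),
      S.indicator (fun z' => binPMF L ε z' *
        Real.exp (((α:ℝ) * (x:ℝ) + (β:ℝ) * (x:ℝ) ^ 2 +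
          (α':ℝ) * (z':ℝ) + (β':ℝ) * (z':ℝ) ^ 2) / (s':ℝ))) z with hNdef
  -- Cauchy-Schwarz
  have hCS : Efull^2 ≤ (∑ z ∈ Finset.Icc (-(L:ℤ)) (L:ℤ), binPMF L ε z) *
      (∑ z ∈ Finset.Icc (-(L:ℤ)) (L:ℤ), binPMF L ε z * ((z:ℝ))^2) := by
    have h1 := Finset.sum_mul_sq_le_sq_mul_sq (Finset.Icc (-(L:ℤ)) (L:ℤ))
      (fun z => Real.sqrt (binPMF L ε z)) (fun z => Real.sqrt (binPMF L ε z) * |(z:ℝ)|)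
    have e1 : ∀ z ∈ Finset.Icc (-(L:ℤ)) (L:ℤ),
        Real.sqrt (binPMF L ε z) * (Real.sqrt (binPMF L ε z) * |(z:ℝ)|)
          = binPMF L ε z * |(z:ℝ)| := by
      intro z _; rw [← mul_assoc, Real.mul_self_sqrt (hP z)]
    have e2 : ∀ z ∈ Finset.Icc (-(L:ℤ)) (L:ℤ),
        (Real.sqrt (binPMF L ε z))^2 = binPMF L ε z := fun z _ => Real.sq_sqrt (hP z)
    have e3 : ∀ z ∈ Finset.Icc (-(L:ℤ)) (L:ℤ),
        (Real.sqrt (binPMF L ε z) * |(z:ℝ)|)^2 = binPMF L ε z * ((z:ℝ))^2 := by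
      intro z _; rw [mul_pow, Real.sq_sqrt (hP z), sq_abs]
    rw [Finset.sum_congr rfl e1, Finset.sum_congr rfl e2, Finset.sum_congr rfl e3] at h1
    exact h1
  have hEfull0 : 0 ≤ Efull := by
    rw [hEfulldef]
    exact Finset.sum_nonneg (fun z _ => mul_nonneg (hP z) (abs_nonneg _))
  have hEfull_le : Efull ≤ Real.sqrt ((1+2*c)*(L:ℝ)) := by
    apply (Real.le_sqrt hEfull0 (mul_nonneg (by linarith : (0:ℝ) ≤ 1+2*c) hL0.le)).mpr
    rw [hsum1] at hCS
    calc Efull^2 ≤ 1 * (∑ z ∈ Finset.Icc (-(L:ℤ)) (L:ℤ), binPMF L ε z * ((z:ℝ))^2) := hCS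
      _ = ∑ z ∈ Finset.Icc (-(L:ℤ)) (L:ℤ), binPMF L ε z * ((z:ℝ))^2 := one_mul _
      _ ≤ (1+2*c)*(L:ℝ) := hEsqle
  -- sum manipulations
  have hNW : N - W = ∑ z ∈ Finset.Icc (-(L:ℤ)) (L:ℤ),
      S.indicator (fun z' => binPMF L ε z' *
        (Real.exp (((α:ℝ) * (x:ℝ) + (β:ℝ) * (x:ℝ) ^ 2 +
          (α':ℝ) * (z':ℝ) + (β':ℝ) * (z':ℝ) ^ 2) / (s':ℝ)) - 1)) z := by
    rw [hNdef, hWdef, ← Finset.sum_sub_distrib]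
    refine Finset.sum_congr rfl (fun z _ => ?_)
    by_cases hz : z ∈ S
    · simp only [Set.indicator_of_mem hz]; ring
    · simp only [Set.indicator_of_notMem hz, sub_zero]
  have hptwise : ∀ z ∈ Finset.Icc (-(L:ℤ)) (L:ℤ),
      |S.indicator (fun z' => binPMF L ε z' *
        (Real.exp (((α:ℝ) * (x:ℝ) + (β:ℝ) * (x:ℝ) ^ 2 +
          (α':ℝ) * (z':ℝ) + (β':ℝ) * (z':ℝ) ^ 2) / (s':ℝ)) - 1)) z|
      ≤ S.indicator (fun z' => binPMF L ε z' *
          (Real.exp (16*c) * (Av + Bv * |(z':ℝ)|))) z := by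
    intro z _
    by_cases hz : z ∈ S
    · simp only [Set.indicator_of_mem hz]
      rw [abs_mul, abs_of_nonneg (hP z)]
      exact mul_le_mul_of_nonneg_left (habs z hz) (hP z)
    · simp only [Set.indicator_of_notMem hz, abs_zero]
      exact le_refl 0
  have hsplit : ∑ z ∈ Finset.Icc (-(L:ℤ)) (L:ℤ),
      S.indicator (fun z' => binPMF L ε z' *
        (Real.exp (16*c) * (Av + Bv * |(z':ℝ)|))) z
      = Real.exp (16*c) * (Av * W + Bv * Ebar) := by
    have e : ∀ z ∈ Finset.Icc (-(L:ℤ)) (L:ℤ),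
        S.indicator (fun z' => binPMF L ε z' *
          (Real.exp (16*c) * (Av + Bv * |(z':ℝ)|))) z
        = Real.exp (16*c) * Av * S.indicator (fun z' => binPMF L ε z') z +
          Real.exp (16*c) * Bv * S.indicator (fun z' => binPMF L ε z' * |(z':ℝ)|) z := by
      intro z _
      by_cases hz : z ∈ S
      · simp only [Set.indicator_of_mem hz]; ring
      · simp only [Set.indicator_of_notMem hz]; ring
    rw [Finset.sum_congr rfl e, Finset.sum_add_distrib, ← Finset.mul_sum, ← Finset.mul_sum,
      hWdef, hEbardef]
    ring
  have hkey : |N - W| ≤ Real.exp (16*c) * (Av * W + Bv * Ebar) := by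
    rw [hNW]
    exact le_trans (Finset.abs_sum_le_sum_abs _ _)
      (le_trans (Finset.sum_le_sum hptwise) (le_of_eq hsplit))
  have hEbarle : Ebar ≤ Efull * W := (div_le_iff₀ hW).mp hEcond
  -- final estimates
  have hX0 : 0 ≤ |(x:ℝ)| / sL := div_nonneg (abs_nonneg _) hsL0.le
  have hAr : Av ≤ 8*sc*r*(|(x:ℝ)|/sL) := by
    have h1 : Av ≤ (8*sc*sl/(L:ℝ)) * |(x:ℝ)| := by
      rw [hAvdef]
      exact mul_le_mul_of_nonneg_right hBvle (abs_nonneg _)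
    have h2 : (8*sc*sl/(L:ℝ)) * |(x:ℝ)| = 8*sc*r*(|(x:ℝ)|/sL) := by
      rw [← hrsL, ← hsLsq]
      field_simp
    linarith only [h1, h2]
  have hBr : Bv * Real.sqrt ((1+2*c)*(L:ℝ)) ≤ 8*(sc*s2c)*r := by
    have hsq : Real.sqrt ((1+2*c)*(L:ℝ)) = s2c * sL := by
      rw [Real.sqrt_mul (by linarith : (0:ℝ) ≤ 1+2*c), ← hs2cdef, ← hsLdef]
    rw [hsq]
    have h1 : Bv * (s2c * sL) ≤ (8*sc*sl/(L:ℝ)) * (s2c * sL) :=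
      mul_le_mul_of_nonneg_right hBvle (mul_nonneg hs2c0 hsL0.le)
    have h2 : (8*sc*sl/(L:ℝ)) * (s2c * sL) = 8*(sc*s2c)*r := by
      rw [← hrsL, ← hsLsq]
      field_simp
    linarith only [h1, h2]
  have hQ : Av + Bv * Efull ≤ 8*sc*r*(|(x:ℝ)|/sL) + 8*(sc*s2c)*r := by
    have h1 : Bv * Efull ≤ Bv * Real.sqrt ((1+2*c)*(L:ℝ)) :=
      mul_le_mul_of_nonneg_left hEfull_le hBv0
    linarith only [hAr, hBr, h1]
  -- conclude
  have hgoalform : N / W - 1 = (N - W) / W := by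
    field_simp
  rw [hgoalform, abs_div, abs_of_pos hW, div_le_iff₀ hW]
  have hccc : Real.sqrt (c*(1+2*c)) = sc * s2c := by
    rw [Real.sqrt_mul hc.le, ← hscdef, ← hs2cdef]
  show |N - W| ≤ Real.exp (16*c) * (8*sc + 8*Real.sqrt (c*(1+2*c))) * r *
    (1 + |(x:ℝ)| / sL) * W
  rw [hccc]
  have step1 : Real.exp (16*c) * (Av * W + Bv * Ebar)
      ≤ Real.exp (16*c) * ((Av + Bv * Efull) * W) := by
    have h1 : Bv * Ebar ≤ Bv * (Efull * W) := mul_le_mul_of_nonneg_left hEbarle hBv0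
    have h2 := mul_le_mul_of_nonneg_left h1 (Real.exp_pos (16*c)).le
    nlinarith only [h2]
  have step2 : Real.exp (16*c) * ((Av + Bv * Efull) * W)
      ≤ Real.exp (16*c) * ((8*sc*r*(|(x:ℝ)|/sL) + 8*(sc*s2c)*r) * W) := by
    have h1 := mul_le_mul_of_nonneg_right hQ hW.le
    have h2 := mul_le_mul_of_nonneg_left h1 (Real.exp_pos (16*c)).le
    nlinarith only [h2]
  have step3 : Real.exp (16*c) * ((8*sc*r*(|(x:ℝ)|/sL) + 8*(sc*s2c)*r) * W)
      ≤ Real.exp (16*c) * (8*sc + 8*(sc*s2c)) * r * (1 + |(x:ℝ)| / sL) * W := by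
    have h1 : 8*sc*r*(|(x:ℝ)|/sL) + 8*(sc*s2c)*r
        ≤ (8*sc + 8*(sc*s2c)) * r * (1 + |(x:ℝ)| / sL) := by
      nlinarith only [mul_nonneg hsc0 hr0, hX0, hr0, hsc0, hs2c0,
        mul_nonneg (mul_nonneg (mul_nonneg hsc0 hs2c0) hr0) hX0]
    have h2 := mul_le_mul_of_nonneg_right h1 hW.le
    have h3 := mul_le_mul_of_nonneg_left h2 (Real.exp_pos (16*c)).le
    nlinarith only [h3]
  linarith only [hkey, step1, step2, step3]
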